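/- Triangle augmentation, backward direction: let (G, rk) be an SRTI instance and let G' arise from G by adding, for each vertex v ∈ V(G), two new vertices v' and v'' together with edges {v,v'}, {v,v''}, {v',v''}, with ranks rk_v(v') = α_v + 1 and rk_v(v'') = α_v + 2 where α_v = max over w ∈ N_G(v) of rk_v(w), and rk_{v'}(v) = 2, rk_{v'}(v'') = 1, rk_{v''}(v) = 1, rk_{v''}(v') = 2. If G' contains a stable matching M', then every vertex v ∈ V(G) is matched in M' to a vertex of V(G), and the restriction of M' to edges of G is a perfect stable matching of G. -/

import Mathlib

open scoped Classical

noncomputable section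

/-- A matching of a graph `G`, given by the partner function: `partner v = v` means
that `v` is unmatched, and otherwise `v` is matched to `partner v`, which must be one
of its neighbours in the acceptability graph `G`. -/
structure Matching {V : Type} (G : SimpleGraph V) where
  partner : V → V
  involutive : ∀ v, partner (partner v) = v
  adj_of_ne : ∀ v, partner v ≠ v → G.Adj v (partner v)

/-- The set of edges of a matching. -/
def Matching.edgeSet {V : Type} {G : SimpleGraph V} (M : Matching G) : Set (Sym2 V) :=
  {e | ∃ v, M.partner v ≠ v ∧ e = s(v, M.partner v)}

/-- The pair `{v, w}` is blocking for the matching `M` (with respect to the rank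
functions `rk`, where `rk v w = ⊤` encodes that `v` prefers any acceptable partner to
`w`; in particular `rk v v = ⊤`, so that an unmatched agent prefers every neighbour to
staying alone): `v` and `w` are adjacent, and each strictly prefers the other to its
current situation. -/
def IsBlocking {V : Type} (G : SimpleGraph V) (rk : V → V → ℕ∞) (M : Matching G)
    (v w : V) : Prop :=
  G.Adj v w ∧ rk v w < rk v (M.partner v) ∧ rk w v < rk w (M.partner w)

/-- A matching is stable if no edge of `G` is blocking. -/
def Stable {V : Type} (G : SimpleGraph V) (rk : V → V → ℕ∞) (M : Matching G) : Prop :=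
  ∀ v w : V, ¬ IsBlocking G rk M v w
/-- The graph `G'` obtained from `G` by adding, for each vertex `v`, two new vertices
`v' = .inr (.inl v)` and `v'' = .inr (.inr v)` together with the triangle edges
`{v,v'}`, `{v,v''}` and `{v',v''}`. -/
def triGraph {V : Type} (G : SimpleGraph V) : SimpleGraph (V ⊕ V ⊕ V) where
  Adj a b :=
    match a, b with
    | Sum.inl v, Sum.inl w => G.Adj v w
    | Sum.inl v, Sum.inr (Sum.inl w) => v = w
    | Sum.inl v, Sum.inr (Sum.inr w) => v = w
    | Sum.inr (Sum.inl v), Sum.inl w => v = w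
    | Sum.inr (Sum.inr v), Sum.inl w => v = w
    | Sum.inr (Sum.inl v), Sum.inr (Sum.inr w) => v = w
    | Sum.inr (Sum.inr v), Sum.inr (Sum.inl w) => v = w
    | _, _ => False
  symm := by
    constructor
    rintro (v | v | v) (w | w | w) h
    · exact G.symm.symm _ _ h
    · exact h.symm
    · exact h.symm
    · exact h.symm
    · exact h
    · exact h.symm
    · exact h.symm
    · exact h.symm
    · exact h
  loopless := by
    constructor
    rintro (v | v | v) h
    · exact G.loopless.irrefl v h
    · exact h
    · exact h

/-- The largest rank that `v` assigns to a neighbour in `G`. -/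
def maxRank {V : Type} (G : SimpleGraph V) (rk : V → V → ℕ∞) (v : V) : ℕ∞ :=
  ⨆ w ∈ G.neighborSet v, rk v w

/-- The ranks for the triangle-augmented instance: writing `α_v` for the largest rank
`v` assigns to a neighbour in `G`, we set `rk_v(v') = α_v + 1`, `rk_v(v'') = α_v + 2`,
`rk_{v'}(v) = 2`, `rk_{v'}(v'') = 1`, `rk_{v''}(v) = 1` and `rk_{v''}(v') = 2`;
all other (non-adjacent) pairs get rank `⊤`. -/
def triRank {V : Type} [DecidableEq V] (G : SimpleGraph V) (rk : V → V → ℕ∞) :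
    (V ⊕ V ⊕ V) → (V ⊕ V ⊕ V) → ℕ∞
  | Sum.inl v, Sum.inl w => rk v w
  | Sum.inl v, Sum.inr (Sum.inl w) => if v = w then maxRank G rk v + 1 else ⊤
  | Sum.inl v, Sum.inr (Sum.inr w) => if v = w then maxRank G rk v + 2 else ⊤
  | Sum.inr (Sum.inl v), Sum.inl w => if v = w then 2 else ⊤
  | Sum.inr (Sum.inl v), Sum.inr (Sum.inr w) => if v = w then 1 else ⊤
  | Sum.inr (Sum.inr v), Sum.inl w => if v = w then 1 else ⊤
  | Sum.inr (Sum.inr v), Sum.inr (Sum.inl w) => if v = w then 2 else ⊤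
  | _, _ => ⊤
/-- Triangle augmentation, backward direction: if the
triangle-augmented instance has a stable matching `M'`, then every original vertex `v`
is matched in `M'` to an original vertex, and the restriction of `M'` to the edges of
`G` is a perfect stable matching of `G`. -/
theorem perfect_stable_of_triGraph_stable {V : Type} [Fintype V] [DecidableEq V]
    (G : SimpleGraph V) (rk : V → V → ℕ∞)
    (hself : ∀ v, rk v v = ⊤)
    (hfin : ∀ v w, G.Adj v w → rk v w ≠ ⊤)
    (M' : Matching (triGraph G)) (hM' : Stable (triGraph G) (triRank G rk) M') :
    (∀ v : V, ∃ w : V, w ≠ v ∧ M'.partner (Sum.inl v) = Sum.inl w) ∧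
    ∃ M : Matching G,
      (∀ v : V, Sum.inl (M.partner v) = M'.partner (Sum.inl v)) ∧
      Stable G rk M ∧ (∀ v : V, M.partner v ≠ v) := by
  have halpha : ∀ v : V, maxRank G rk v ≠ ⊤ := by
    intro v
    have hle : maxRank G rk v ≤
        Finset.univ.sup (fun w => if G.Adj v w then rk v w else 0) := by
      refine iSup₂_le fun w hw => ?_
      have hadj : G.Adj v w := hw
      have h := Finset.le_sup (f := fun w => if G.Adj v w then rk v w else 0)
        (Finset.mem_univ w)
      simpa [hadj] using h
    have hlt : Finset.univ.sup (fun w => if G.Adj v w then rk v w else 0) < ⊤ := by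
      rw [Finset.sup_lt_iff (by simp : (⊥ : ℕ∞) < ⊤)]
      intro w _
      by_cases hadj : G.Adj v w
      · simp [hadj, lt_top_iff_ne_top, hfin v w hadj]
      · simp [hadj]
    exact (hle.trans_lt hlt).ne
  have key : ∀ v : V, ∃ w : V, w ≠ v ∧ M'.partner (Sum.inl v) = Sum.inl w := by
    intro v
    have h1 : maxRank G rk v + 1 < maxRank G rk v + 2 :=
      WithTop.add_lt_add_left (halpha v) (by exact (by norm_num : (1:ℕ∞) < 2))
    have h1t : maxRank G rk v + 1 < ⊤ := by
      rw [lt_top_iff_ne_top]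
      exact WithTop.add_ne_top.mpr ⟨halpha v, by exact ENat.one_ne_top⟩
    have h2t : maxRank G rk v + 2 < ⊤ := by
      rw [lt_top_iff_ne_top]
      exact WithTop.add_ne_top.mpr ⟨halpha v, by exact ENat.ofNat_ne_top 2⟩
    -- possibilities for the partner of v'
    have pb : M'.partner (Sum.inr (Sum.inl v)) = Sum.inr (Sum.inl v) ∨
              M'.partner (Sum.inr (Sum.inl v)) = Sum.inl v ∨
              M'.partner (Sum.inr (Sum.inl v)) = Sum.inr (Sum.inr v) := by
      by_cases h : M'.partner (Sum.inr (Sum.inl v)) = Sum.inr (Sum.inl v)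
      · exact Or.inl h
      · have hadj := M'.adj_of_ne _ h
        right
        rcases hp : M'.partner (Sum.inr (Sum.inl v)) with w | w | w <;>
          rw [hp] at hadj
        · have hv : v = w := hadj
          left; exact congrArg Sum.inl hv.symm
        · exact hadj.elim
        · have hv : v = w := hadj
          right; exact congrArg (Sum.inr ∘ Sum.inr) hv.symm
    -- possibilities for the partner of v''
    have pc : M'.partner (Sum.inr (Sum.inr v)) = Sum.inr (Sum.inr v) ∨
              M'.partner (Sum.inr (Sum.inr v)) = Sum.inl v ∨
              M'.partner (Sum.inr (Sum.inr v)) = Sum.inr (Sum.inl v) := by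
      by_cases h : M'.partner (Sum.inr (Sum.inr v)) = Sum.inr (Sum.inr v)
      · exact Or.inl h
      · have hadj := M'.adj_of_ne _ h
        right
        rcases hp : M'.partner (Sum.inr (Sum.inr v)) with w | w | w <;>
          rw [hp] at hadj
        · have hv : v = w := hadj
          left; exact congrArg Sum.inl hv.symm
        · have hv : v = w := hadj
          right; exact congrArg (Sum.inr ∘ Sum.inl) hv.symm
        · exact hadj.elim
    rcases ha : M'.partner (Sum.inl v) with w | w | w
    · -- partner is an original vertex
      by_cases hwv : w = v
      · -- v unmatched: blocking pair exists
        exfalso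
        subst hwv
        rcases pb with hb | hb | hb
        · -- v' also unmatched: {v, v'} blocks
          refine hM' (Sum.inl w) (Sum.inr (Sum.inl w)) ⟨rfl, ?_, ?_⟩
          · rw [ha]; simpa [triRank, hself w] using h1t
          · rw [hb]; simp [triRank, lt_top_iff_ne_top]
        · -- v' matched to v: contradicts ha
          have h := M'.involutive (Sum.inr (Sum.inl w))
          rw [hb, ha] at h
          exact absurd h (by simp)
        · -- v' matched to v'': {v, v''} blocks
          have hc : M'.partner (Sum.inr (Sum.inr w)) = Sum.inr (Sum.inl w) := by
            have h := M'.involutive (Sum.inr (Sum.inl w))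
            rw [hb] at h; exact h
          refine hM' (Sum.inl w) (Sum.inr (Sum.inr w)) ⟨rfl, ?_, ?_⟩
          · rw [ha]; simpa [triRank, hself w] using h2t
          · rw [hc]; simp [triRank]
      · exact ⟨w, hwv, rfl⟩
    · -- v matched to v'
      exfalso
      have hne : M'.partner (Sum.inl v) ≠ Sum.inl v := by rw [ha]; simp
      have hadj := M'.adj_of_ne _ hne
      rw [ha] at hadj
      have hv : v = w := hadj
      subst hv
      have hb : M'.partner (Sum.inr (Sum.inl v)) = Sum.inl v := by
        have h := M'.involutive (Sum.inl v); rw [ha] at h; exact h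
      have hc : M'.partner (Sum.inr (Sum.inr v)) = Sum.inr (Sum.inr v) := by
        rcases pc with h | h | h
        · exact h
        · have h' := M'.involutive (Sum.inr (Sum.inr v))
          rw [h, ha] at h'
          exact absurd h' (by simp)
        · have h' := M'.involutive (Sum.inr (Sum.inr v))
          rw [h, hb] at h'
          exact absurd h' (by simp)
      -- {v'', v'} blocks
      refine hM' (Sum.inr (Sum.inr v)) (Sum.inr (Sum.inl v)) ⟨rfl, ?_, ?_⟩
      · rw [hc]; simp [triRank, lt_top_iff_ne_top]
      · rw [hb]; simp [triRank]
    · -- v matched to v''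
      exfalso
      have hne : M'.partner (Sum.inl v) ≠ Sum.inl v := by rw [ha]; simp
      have hadj := M'.adj_of_ne _ hne
      rw [ha] at hadj
      have hv : v = w := hadj
      subst hv
      have hc : M'.partner (Sum.inr (Sum.inr v)) = Sum.inl v := by
        have h := M'.involutive (Sum.inl v); rw [ha] at h; exact h
      have hb : M'.partner (Sum.inr (Sum.inl v)) = Sum.inr (Sum.inl v) := by
        rcases pb with h | h | h
        · exact h
        · have h' := M'.involutive (Sum.inr (Sum.inl v))
          rw [h, ha] at h'
          exact absurd h' (by simp)
        · have h' := M'.involutive (Sum.inr (Sum.inl v))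
          rw [h, hc] at h'
          exact absurd h' (by simp)
      -- {v', v} blocks
      refine hM' (Sum.inr (Sum.inl v)) (Sum.inl v) ⟨rfl, ?_, ?_⟩
      · rw [hb]; simp [triRank, lt_top_iff_ne_top]
      · rw [ha]; simpa [triRank] using h1
  refine ⟨key, ?_⟩
  choose f hf1 hf2 using key
  have hinv : ∀ v, f (f v) = v := by
    intro v
    have h := M'.involutive (Sum.inl v)
    rw [hf2 v, hf2 (f v)] at h
    exact Sum.inl.inj h
  have hadjf : ∀ v, G.Adj v (f v) := by
    intro v
    have hne : M'.partner (Sum.inl v) ≠ Sum.inl v := by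
      rw [hf2 v]; simp [hf1 v]
    have h := M'.adj_of_ne _ hne
    rw [hf2 v] at h
    exact h
  refine ⟨⟨f, hinv, fun v _ => hadjf v⟩, fun v => (hf2 v).symm, ?_, fun v => hf1 v⟩
  rintro v w ⟨hadj', hv, hw⟩
  refine hM' (Sum.inl v) (Sum.inl w) ⟨hadj', ?_, ?_⟩
  · rw [hf2 v]; exact hv
  · rw [hf2 w]; exact hw

end
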